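/- Let K be a field and let P, Q be polynomials over K with m = natDegree P ≥ 1 and m′ = natDegree Q ≥ 1. Then the following are equivalent: (i) there exist nonzero polynomials L₁ and L₂ over K with natDegree L₁ ≤ m′ − 1 and natDegree L₂ ≤ m − 1 such that L₁·P + L₂·Q = 0; (ii) there exists a polynomial D over K with 1 ≤ natDegree D such that D ∣ P and D ∣ Q. -/
import Mathlib


open Polynomial

/-- The linear-algebraic heart of Bézout's 1764 elimination method: two polynomials
`P`, `Q` of degrees `m, m′ ≥ 1` over a field admit a nontrivial relation
`L₁·P + L₂·Q = 0` with `natDegree L₁ ≤ m′ − 1` and `natDegree L₂ ≤ m − 1`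
if and only if they have a common divisor of degree at least one. -/
theorem exists_syzygy_iff_common_factor {K : Type*} [Field K]
    (P Q : Polynomial K) (hP : 1 ≤ P.natDegree) (hQ : 1 ≤ Q.natDegree) :
    (∃ L₁ L₂ : Polynomial K, L₁ ≠ 0 ∧ L₂ ≠ 0 ∧
        L₁.natDegree ≤ Q.natDegree - 1 ∧ L₂.natDegree ≤ P.natDegree - 1 ∧
        L₁ * P + L₂ * Q = 0) ↔
      ∃ D : Polynomial K, 1 ≤ D.natDegree ∧ D ∣ P ∧ D ∣ Q := by
  classical
  have hP0 : P ≠ 0 := fun h => by simp [h] at hP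
  have hQ0 : Q ≠ 0 := fun h => by simp [h] at hQ
  constructor
  · rintro ⟨L₁, L₂, hL₁, hL₂, hd₁, hd₂, hrel⟩
    refine ⟨EuclideanDomain.gcd P Q, ?_, EuclideanDomain.gcd_dvd_left P Q,
      EuclideanDomain.gcd_dvd_right P Q⟩
    by_contra hcon
    push_neg at hcon
    have h : (EuclideanDomain.gcd P Q).natDegree = 0 := by omega
    have hg0 : EuclideanDomain.gcd P Q ≠ 0 := fun h0 =>
      hP0 (EuclideanDomain.gcd_eq_zero_iff.mp h0).1
    have hunit : IsUnit (EuclideanDomain.gcd P Q) :=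
      isUnit_iff_degree_eq_zero.mpr (by
        rw [degree_eq_natDegree hg0, h]; rfl)
    have hcop : IsCoprime P Q := EuclideanDomain.gcd_isUnit_iff.mp hunit
    -- L₁ * P = -(L₂ * Q), so P ∣ L₂ * Q, P coprime Q ⇒ P ∣ L₂
    have hPdvd : P ∣ L₂ * Q := ⟨-L₁, by linear_combination hrel⟩
    have hPL₂ : P ∣ L₂ := hcop.dvd_of_dvd_mul_right hPdvd
    have := Polynomial.natDegree_le_of_dvd hPL₂ hL₂
    omega
  · rintro ⟨D, hD, ⟨P', hP'⟩, ⟨Q', hQ'⟩⟩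
    have hD0 : D ≠ 0 := fun h => by simp [h] at hD
    have hP'0 : P' ≠ 0 := fun h => hP0 (by simp [hP', h])
    have hQ'0 : Q' ≠ 0 := fun h => hQ0 (by simp [hQ', h])
    refine ⟨Q', -P', hQ'0, neg_ne_zero.mpr hP'0, ?_, ?_, ?_⟩
    · have : Q.natDegree = D.natDegree + Q'.natDegree := by
        rw [hQ', natDegree_mul hD0 hQ'0]
      omega
    · have : P.natDegree = D.natDegree + P'.natDegree := by
        rw [hP', natDegree_mul hD0 hP'0]
      rw [natDegree_neg]; omega
    · rw [hP', hQ']; ring
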